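/- Let p be a prime, a a positive integer, and 1 <= r <= p-1. Let abar be the smallest positive integer congruent to a modulo p-1. Then the sum over b >= 0 of binomial(a, b*(p-1)+r) is congruent to binomial(abar, r) modulo p. -/
import Mathlib

open Finset

/-- Reindexing lemma. -/
lemma glaisher_reindex (p r n : ℕ) (hp2 : 2 ≤ p) (hr1 : 1 ≤ r) (hr2 : r ≤ p - 1) :
    (∑ k ∈ Finset.range (n + 1), if (p - 1) ∣ (p - 1 - r + k) then n.choose k else 0)
      = (if r = p - 1 then 1 else 0)
        + ∑ b ∈ Finset.range (n + 1), n.choose (b * (p - 1) + r) := by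
  rw [Finset.sum_range_succ']
  have h0 : (if (p - 1) ∣ (p - 1 - r + 0) then n.choose 0 else 0)
      = (if r = p - 1 then 1 else 0) := by
    rcases eq_or_ne r (p - 1) with h | h
    · simp [h]
    · rw [if_neg, if_neg h]
      intro hd
      have := Nat.le_of_dvd (by omega) hd
      omega
  rw [h0, add_comm]
  congr 1
  have hR : ∑ b ∈ Finset.range (n + 1), n.choose (b * (p - 1) + r)
      = ∑ b ∈ Finset.range (n + 1),
          if b * (p - 1) + r ≤ n then n.choose (b * (p - 1) + r) else 0 := by
    apply Finset.sum_congr rfl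
    intro b _
    rcases le_or_gt (b * (p - 1) + r) n with h | h
    · rw [if_pos h]
    · rw [if_neg (by omega), Nat.choose_eq_zero_of_lt h]
  rw [hR, Finset.sum_ite, Finset.sum_ite, Finset.sum_const, Finset.sum_const, smul_zero,
    smul_zero, add_zero, add_zero]
  -- helper facts generator
  have key : ∀ i m : ℕ, p - 1 - r + (i + 1) = (p - 1) * m →
      1 ≤ m ∧ (m - 1) * (p - 1) + r = i + 1 := by
    intro i m hm
    have h2 : (p - 1) * m = m * (p - 1) := Nat.mul_comm _ _
    have h1 : (m - 1) * (p - 1) = m * (p - 1) - 1 * (p - 1) := Nat.sub_mul m 1 (p - 1)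
    have hm1 : 1 ≤ m := by
      rcases Nat.eq_zero_or_pos m with h | h
      · subst h; omega
      · exact h
    have h6 : 1 * (p - 1) ≤ m * (p - 1) := Nat.mul_le_mul_right _ hm1
    exact ⟨hm1, by omega⟩
  apply Finset.sum_nbij' (fun i => (p - 1 - r + (i + 1)) / (p - 1) - 1)
    (fun b => b * (p - 1) + r - 1)
  · intro i hi
    simp only [Finset.mem_filter, Finset.mem_range] at hi ⊢
    obtain ⟨hi1, m, hm⟩ := hi
    obtain ⟨hm1, hkey⟩ := key i m hm
    have h4 : m - 1 ≤ (m - 1) * (p - 1) := Nat.le_mul_of_pos_right _ (by omega)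
    rw [hm, Nat.mul_div_cancel_left _ (by omega : 0 < p - 1)]
    omega
  · intro b hb
    simp only [Finset.mem_filter, Finset.mem_range] at hb ⊢
    obtain ⟨hb1, hb2⟩ := hb
    refine ⟨by omega, ?_⟩
    have h : (p - 1) * (b + 1) = b * (p - 1) + (p - 1) := by ring
    have : p - 1 - r + (b * (p - 1) + r - 1 + 1) = (p - 1) * (b + 1) := by omega
    rw [this]
    exact dvd_mul_right _ _
  · intro i hi
    simp only [Finset.mem_filter, Finset.mem_range] at hi
    obtain ⟨hi1, m, hm⟩ := hi
    obtain ⟨hm1, hkey⟩ := key i m hm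
    rw [hm, Nat.mul_div_cancel_left _ (by omega : 0 < p - 1)]
    omega
  · intro b hb
    simp only [Finset.mem_filter, Finset.mem_range] at hb
    have h : (p - 1) * (b + 1) = b * (p - 1) + (p - 1) := by ring
    have heq : p - 1 - r + (b * (p - 1) + r - 1 + 1) = (p - 1) * (b + 1) := by omega
    rw [heq, Nat.mul_div_cancel_left _ (by omega : 0 < p - 1)]
    omega
  · intro i hi
    simp only [Finset.mem_filter, Finset.mem_range] at hi
    obtain ⟨hi1, m, hm⟩ := hi
    obtain ⟨hm1, hkey⟩ := key i m hm
    rw [hm, Nat.mul_div_cancel_left _ (by omega : 0 < p - 1)]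
    congr 1
    omega

/-- Key character-sum computation. -/
lemma glaisher_key (p : ℕ) [Fact p.Prime] (r n : ℕ) (hp2 : 2 ≤ p) (hr1 : 1 ≤ r)
    (hr2 : r ≤ p - 1) :
    (∑ t : (ZMod p)ˣ, ((t : ZMod p) ^ (p - 1 - r) * (1 + (t : ZMod p)) ^ n))
      = -((if r = p - 1 then 1 else 0)
          + ∑ b ∈ Finset.range (n + 1), (n.choose (b * (p - 1) + r) : ZMod p)) := by
  classical
  have hstep : ∀ t : (ZMod p)ˣ, (t : ZMod p) ^ (p - 1 - r) * (1 + (t : ZMod p)) ^ n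
      = ∑ k ∈ Finset.range (n + 1),
          ((t : ZMod p) ^ (p - 1 - r + k) * (n.choose k : ZMod p)) := by
    intro t
    rw [add_comm (1 : ZMod p), add_pow, Finset.mul_sum]
    apply Finset.sum_congr rfl
    intro k _
    rw [one_pow, mul_one, pow_add]
    ring
  simp_rw [hstep]
  rw [Finset.sum_comm]
  have hsum : ∀ k, (∑ t : (ZMod p)ˣ, ((t : ZMod p) ^ (p - 1 - r + k) * (n.choose k : ZMod p)))
      = (if (p - 1) ∣ (p - 1 - r + k) then (-1 : ZMod p) else 0) * (n.choose k : ZMod p) := by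
    intro k
    rw [← Finset.sum_mul]
    congr 1
    have := FiniteField.sum_pow_units (ZMod p) (p - 1 - r + k)
    rwa [ZMod.card] at this
  simp_rw [hsum]
  have hneg : ∀ k, (if (p - 1) ∣ (p - 1 - r + k) then (-1 : ZMod p) else 0) * (n.choose k : ZMod p)
      = -(if (p - 1) ∣ (p - 1 - r + k) then (n.choose k : ZMod p) else 0) := by
    intro k
    split_ifs <;> simp
  simp_rw [hneg]
  rw [Finset.sum_neg_distrib]
  congr 1
  have hcast := congrArg (Nat.cast : ℕ → ZMod p) (glaisher_reindex p r n hp2 hr1 hr2)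
  push_cast at hcast
  exact hcast

/-- Glaisher's congruence (1899). -/
theorem glaisher (p a r abar : ℕ) (hp : p.Prime) (ha : 0 < a)
    (hr1 : 1 ≤ r) (hr2 : r ≤ p - 1)
    (habar_pos : 0 < abar) (habar_cong : abar ≡ a [MOD p - 1])
    (habar_min : ∀ m, 0 < m → m ≡ a [MOD p - 1] → abar ≤ m) :
    (∑ b ∈ Finset.range (a + 1), a.choose (b * (p - 1) + r)) ≡ abar.choose r [MOD p] := by
  haveI : Fact p.Prime := ⟨hp⟩
  have hp2 : 2 ≤ p := hp.two_le
  have habar_le : abar ≤ p - 1 := by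
    by_contra h
    push_neg at h
    have h1 : 0 < abar - (p - 1) := by omega
    have h2 : abar - (p - 1) ≡ a [MOD p - 1] := by
      have h3 : abar - (p - 1) + (p - 1) ≡ abar - (p - 1) [MOD p - 1] := Nat.add_modEq_right
      have heq : abar - (p - 1) + (p - 1) = abar := by omega
      rw [heq] at h3
      exact h3.symm.trans habar_cong
    have := habar_min _ h1 h2
    omega
  have habar_le_a : abar ≤ a := habar_min a ha Nat.ModEq.rfl
  obtain ⟨c, hc⟩ : ∃ c, a = abar + (p - 1) * c := by
    have hdvd : (p - 1) ∣ (a - abar) := (Nat.modEq_iff_dvd' habar_le_a).mp habar_cong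
    obtain ⟨c, hc⟩ := hdvd
    exact ⟨c, by omega⟩
  have hpt : ∀ t : (ZMod p)ˣ, (t : ZMod p) ^ (p - 1 - r) * (1 + (t : ZMod p)) ^ a
      = (t : ZMod p) ^ (p - 1 - r) * (1 + (t : ZMod p)) ^ abar := by
    intro t
    rcases eq_or_ne (1 + (t : ZMod p)) 0 with h | h
    · rw [h, zero_pow (by omega), zero_pow (by omega)]
    · have hone : (1 + (t : ZMod p)) ^ (p - 1) = 1 := ZMod.pow_card_sub_one_eq_one h
      rw [hc, pow_add, pow_mul, hone, one_pow, mul_one]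
  have hA := glaisher_key p r a hp2 hr1 hr2
  have hB := glaisher_key p r abar hp2 hr1 hr2
  rw [Finset.sum_congr rfl (fun t _ => hpt t), hB] at hA
  have hmain : (∑ b ∈ Finset.range (abar + 1), (abar.choose (b * (p - 1) + r) : ZMod p))
      = ∑ b ∈ Finset.range (a + 1), (a.choose (b * (p - 1) + r) : ZMod p) :=
    add_left_cancel (neg_injective hA)
  have hcollapse : ∑ b ∈ Finset.range (abar + 1), abar.choose (b * (p - 1) + r)
      = abar.choose r := by
    rw [Finset.sum_eq_single_of_mem 0 (Finset.mem_range.mpr (by omega))]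
    · simp
    · intro b _ hb
      apply Nat.choose_eq_zero_of_lt
      have hb1 : 1 ≤ b := Nat.one_le_iff_ne_zero.mpr hb
      have h5 : 1 * (p - 1) ≤ b * (p - 1) := Nat.mul_le_mul_right (p - 1) hb1
      omega
  rw [← ZMod.natCast_eq_natCast_iff]
  push_cast
  rw [← hmain, ← Nat.cast_sum, hcollapse]
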